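/- Fix an equity allocation σ ∈ ℝ^n with σ_i ≥ 0 for all i. Then there exists exactly one pair (a*, Y*) with a* ∈ ℝ^n, a*_i ≥ 0 for all i, and Y* ≥ 0 such that (I − P'(Y*)·β·diag(σ)·G)·a* = P'(Y*)·σ and Y* = Y(a*). Moreover, a*_i > 0 whenever σ_i > 0, and a*_i = 0 whenever σ_i = 0. -/

import Mathlib

open Matrix Finset
set_option linter.unusedSectionVars false
set_option linter.unusedVariables false
namespace St0


variable {n : ℕ}

/-- The best-response map. -/
noncomputable def K (G : Matrix (Fin n) (Fin n) ℝ) (β : ℝ) (σ : Fin n → ℝ) (s : ℝ)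
    (a : Fin n → ℝ) : Fin n → ℝ :=
  fun i => s * σ i * (1 + β * ∑ j, G i j * a j)

/-- Team performance. -/
noncomputable def Ys (G : Matrix (Fin n) (Fin n) ℝ) (β : ℝ) (a : Fin n → ℝ) : ℝ :=
  ∑ i, a i + β / 2 * ∑ i, ∑ j, G i j * a i * a j

section basic

variable {G : Matrix (Fin n) (Fin n) ℝ} {β : ℝ} {σ : Fin n → ℝ}
variable (hG : ∀ i j, 0 ≤ G i j) (hβ : 0 < β) (hσ : ∀ i, 0 ≤ σ i)

include hG hβ hσ

lemma K_nonneg {s : ℝ} (hs : 0 ≤ s) {a : Fin n → ℝ} (ha : ∀ i, 0 ≤ a i) (i : Fin n) :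
    0 ≤ K G β σ s a i := by
  have h1 : (0:ℝ) ≤ ∑ j, G i j * a j :=
    Finset.sum_nonneg fun j _ => mul_nonneg (hG i j) (ha j)
  have : (0:ℝ) ≤ 1 + β * ∑ j, G i j * a j := by positivity
  exact mul_nonneg (mul_nonneg hs (hσ i)) this

lemma K_mono_a {s : ℝ} (hs : 0 ≤ s) {a b : Fin n → ℝ} (hab : ∀ i, a i ≤ b i) (i : Fin n) :
    K G β σ s a i ≤ K G β σ s b i := by
  have h1 : ∑ j, G i j * a j ≤ ∑ j, G i j * b j :=
    Finset.sum_le_sum fun j _ => mul_le_mul_of_nonneg_left (hab j) (hG i j)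
  have h2 : 1 + β * ∑ j, G i j * a j ≤ 1 + β * ∑ j, G i j * b j := by nlinarith
  exact mul_le_mul_of_nonneg_left h2 (mul_nonneg hs (hσ i))

lemma K_mono_s {s' s : ℝ} (hs' : 0 ≤ s') (hss : s' ≤ s) {a : Fin n → ℝ} (ha : ∀ i, 0 ≤ a i)
    (i : Fin n) : K G β σ s' a i ≤ K G β σ s a i := by
  have h1 : (0:ℝ) ≤ ∑ j, G i j * a j :=
    Finset.sum_nonneg fun j _ => mul_nonneg (hG i j) (ha j)
  have h2 : (0:ℝ) ≤ 1 + β * ∑ j, G i j * a j := by positivity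
  exact mul_le_mul_of_nonneg_right (mul_le_mul_of_nonneg_right hss (hσ i)) h2

/-- Zero equity implies zero action at a fixed point. -/
lemma fix_zero {s : ℝ} {a : Fin n → ℝ} (hfa : K G β σ s a = a) {i : Fin n}
    (hi : σ i = 0) : a i = 0 := by
  have := congrFun hfa i
  simp [K, hi] at this
  linarith [this]

/-- Lower bound at a fixed point. -/
lemma fix_lb {s : ℝ} (hs : 0 ≤ s) {a : Fin n → ℝ} (ha : ∀ i, 0 ≤ a i)
    (hfa : K G β σ s a = a) (i : Fin n) : s * σ i ≤ a i := by
  have h1 : (0:ℝ) ≤ ∑ j, G i j * a j :=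
    Finset.sum_nonneg fun j _ => mul_nonneg (hG i j) (ha j)
  have := congrFun hfa i
  rw [K] at this
  nlinarith [mul_nonneg (mul_nonneg (mul_nonneg hs (hσ i)) hβ.le) h1]

/-- KEY comparison lemma: a fixed point for a smaller parameter is dominated by a
fixed point of a larger parameter. -/
lemma comp {s' s : ℝ} (hs' : 0 < s') (hss : s' ≤ s)
    {a a' : Fin n → ℝ} (ha : ∀ i, 0 ≤ a i) (ha' : ∀ i, 0 ≤ a' i)
    (hfa : K G β σ s a = a) (hfa' : K G β σ s' a' = a') : ∀ i, a' i ≤ a i := by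
  have hs : 0 < s := lt_of_lt_of_le hs' hss
  classical
  set T : Finset (Fin n) := Finset.univ.filter (fun i => 0 < σ i) with hT
  rcases T.eq_empty_or_nonempty with hTe | hTne
  · intro i
    have hσi : σ i = 0 := by
      by_contra h
      have : i ∈ T := by
        simp [hT, lt_of_le_of_ne (hσ i) (Ne.symm h)]
      simp [hTe] at this
    rw [fix_zero hG hβ hσ hfa' hσi]
    exact ha i
  · -- maximal ratio
    obtain ⟨i₀, hi₀T, hi₀⟩ := T.exists_max_image (fun i => a' i / a i) hTne
    have hapos : ∀ i ∈ T, 0 < a i := by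
      intro i hi
      have hσi : 0 < σ i := by simpa [hT] using hi
      exact lt_of_lt_of_le (by positivity) (fix_lb hG hβ hσ hs.le ha hfa i)
    set θ := a' i₀ / a i₀ with hθ
    by_cases hθ1 : θ ≤ 1
    · -- a' ≤ a on T, and a' = 0 off T
      intro i
      by_cases hiT : i ∈ T
      · have h1 : a' i / a i ≤ θ := hi₀ i hiT
        have h2 : 0 < a i := hapos i hiT
        calc a' i = (a' i / a i) * a i := by field_simp
        _ ≤ 1 * a i := by
            apply mul_le_mul_of_nonneg_right _ h2.le
            exact le_trans h1 hθ1
        _ = a i := one_mul _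
      · have hσi : σ i = 0 := by
          by_contra h
          exact hiT (by simp [hT, lt_of_le_of_ne (hσ i) (Ne.symm h)])
        rw [fix_zero hG hβ hσ hfa' hσi]; exact ha i
    · exfalso
      push_neg at hθ1
      have hθ0 : 0 < θ := lt_trans one_pos hθ1
      have ha'θ : ∀ j, a' j ≤ θ * a j := by
        intro j
        by_cases hjT : j ∈ T
        · have h1 : a' j / a j ≤ θ := hi₀ j hjT
          have h2 : 0 < a j := hapos j hjT
          calc a' j = (a' j / a j) * a j := by field_simp
          _ ≤ θ * a j := mul_le_mul_of_nonneg_right h1 h2.le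
        · have hσj : σ j = 0 := by
            by_contra h
            exact hjT (by simp [hT, lt_of_le_of_ne (hσ j) (Ne.symm h)])
          rw [fix_zero hG hβ hσ hfa' hσj]
          exact mul_nonneg hθ0.le (ha j)
      have hσ0 : 0 < σ i₀ := by simpa [hT] using hi₀T
      have hai₀ : 0 < a i₀ := hapos i₀ hi₀T
      have hsum : ∑ j, G i₀ j * a' j ≤ θ * ∑ j, G i₀ j * a j := by
        rw [Finset.mul_sum]
        apply Finset.sum_le_sum
        intro j _
        calc G i₀ j * a' j ≤ G i₀ j * (θ * a j) :=
              mul_le_mul_of_nonneg_left (ha'θ j) (hG i₀ j)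
        _ = θ * (G i₀ j * a j) := by ring
      have hGa : (0:ℝ) ≤ ∑ j, G i₀ j * a j :=
        Finset.sum_nonneg fun j _ => mul_nonneg (hG i₀ j) (ha j)
      have heq' : a' i₀ = s' * σ i₀ * (1 + β * ∑ j, G i₀ j * a' j) := (congrFun hfa' i₀).symm
      have heq : a i₀ = s * σ i₀ * (1 + β * ∑ j, G i₀ j * a j) := (congrFun hfa i₀).symm
      have hθa : a' i₀ = θ * a i₀ := by
        rw [hθ]; field_simp
      -- derive contradiction: a' i₀ < θ * a i₀
      have hlt : a' i₀ < θ * a i₀ := by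
        calc a' i₀ = s' * σ i₀ * (1 + β * ∑ j, G i₀ j * a' j) := heq'
        _ ≤ s * σ i₀ * (1 + β * (θ * ∑ j, G i₀ j * a j)) := by
            have hb : (0:ℝ) ≤ β * ∑ j, G i₀ j * a' j := by
              have : (0:ℝ) ≤ ∑ j, G i₀ j * a' j :=
                Finset.sum_nonneg fun j _ => mul_nonneg (hG i₀ j) (ha' j)
              positivity
            have h1 : 1 + β * ∑ j, G i₀ j * a' j ≤ 1 + β * (θ * ∑ j, G i₀ j * a j) := by
              nlinarith
            have h2 : s' * σ i₀ ≤ s * σ i₀ := mul_le_mul_of_nonneg_right hss hσ0.le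
            nlinarith [mul_nonneg hs.le hσ0.le]
        _ < θ * (s * σ i₀ * (1 + β * ∑ j, G i₀ j * a j)) := by nlinarith [mul_pos hs hσ0]
        _ = θ * a i₀ := by rw [← heq]
      rw [hθa] at hlt
      exact lt_irrefl _ hlt

lemma fix_unique {s : ℝ} (hs : 0 < s) {a b : Fin n → ℝ}
    (ha : ∀ i, 0 ≤ a i) (hb : ∀ i, 0 ≤ b i)
    (hfa : K G β σ s a = a) (hfb : K G β σ s b = b) : a = b :=
  funext fun i => le_antisymm (comp hG hβ hσ hs le_rfl hb ha hfb hfa i)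
    (comp hG hβ hσ hs le_rfl ha hb hfa hfb i)

end basic

/-- iterates of `K` starting from `0`. -/
noncomputable def it (G : Matrix (Fin n) (Fin n) ℝ) (β : ℝ) (σ : Fin n → ℝ) (s : ℝ) :
    ℕ → Fin n → ℝ
  | 0 => 0
  | k+1 => K G β σ s (it G β σ s k)

/-- limit (as a sup) of the iterates. -/
noncomputable def afix (G : Matrix (Fin n) (Fin n) ℝ) (β : ℝ) (σ : Fin n → ℝ) (s : ℝ) :
    Fin n → ℝ :=
  fun i => ⨆ k, it G β σ s k i

section iter
variable {G : Matrix (Fin n) (Fin n) ℝ} {β : ℝ} {σ : Fin n → ℝ}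
variable (hG : ∀ i j, 0 ≤ G i j) (hβ : 0 < β) (hσ : ∀ i, 0 ≤ σ i)

include hG hβ hσ

lemma K_nonneg' {s : ℝ} (hs : 0 ≤ s) {a : Fin n → ℝ} (ha : ∀ i, 0 ≤ a i) (i : Fin n) :
    0 ≤ K G β σ s a i := by
  have h1 : (0:ℝ) ≤ ∑ j, G i j * a j :=
    Finset.sum_nonneg fun j _ => mul_nonneg (hG i j) (ha j)
  have : (0:ℝ) ≤ 1 + β * ∑ j, G i j * a j := by positivity
  exact mul_nonneg (mul_nonneg hs (hσ i)) this

lemma K_mono_a' {s : ℝ} (hs : 0 ≤ s) {a b : Fin n → ℝ} (hab : ∀ i, a i ≤ b i) (i : Fin n) :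
    K G β σ s a i ≤ K G β σ s b i := by
  have h1 : ∑ j, G i j * a j ≤ ∑ j, G i j * b j :=
    Finset.sum_le_sum fun j _ => mul_le_mul_of_nonneg_left (hab j) (hG i j)
  have h2 : 1 + β * ∑ j, G i j * a j ≤ 1 + β * ∑ j, G i j * b j := by nlinarith
  exact mul_le_mul_of_nonneg_left h2 (mul_nonneg hs (hσ i))

lemma it_nonneg {s : ℝ} (hs : 0 ≤ s) : ∀ k i, 0 ≤ it G β σ s k i := by
  intro k
  induction k with
  | zero => intro i; simp [it]
  | succ m ih => intro i; exact K_nonneg' hG hβ hσ hs ih i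

lemma it_le_prefix {s : ℝ} (hs : 0 ≤ s) {x : Fin n → ℝ} (hx : ∀ i, 0 ≤ x i)
    (hKx : ∀ i, K G β σ s x i ≤ x i) : ∀ k i, it G β σ s k i ≤ x i := by
  intro k
  induction k with
  | zero => intro i; simpa [it] using hx i
  | succ m ih =>
    intro i
    calc it G β σ s (m+1) i = K G β σ s (it G β σ s m) i := rfl
    _ ≤ K G β σ s x i := K_mono_a' hG hβ hσ hs ih i
    _ ≤ x i := hKx i

lemma it_mono_k' {s : ℝ} (hs : 0 ≤ s) : ∀ k, ∀ i, it G β σ s k i ≤ it G β σ s (k+1) i := by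
  intro k
  induction k with
  | zero => intro i; simpa [it] using it_nonneg hG hβ hσ hs 1 i
  | succ m ih =>
    intro i
    exact K_mono_a' hG hβ hσ hs ih i

lemma it_mono_k {s : ℝ} (hs : 0 ≤ s) (i : Fin n) : Monotone (fun k => it G β σ s k i) :=
  monotone_nat_of_le_succ (fun k => it_mono_k' hG hβ hσ hs k i)

lemma it_mono_s {s' s : ℝ} (hs' : 0 ≤ s') (hss : s' ≤ s) :
    ∀ k i, it G β σ s' k i ≤ it G β σ s k i := by
  intro k
  induction k with
  | zero => intro i; simp [it]
  | succ m ih =>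
    intro i
    calc it G β σ s' (m+1) i = K G β σ s' (it G β σ s' m) i := rfl
    _ ≤ K G β σ s (it G β σ s' m) i := by
        have h1 : (0:ℝ) ≤ ∑ j, G i j * it G β σ s' m j :=
          Finset.sum_nonneg fun j _ => mul_nonneg (hG i j) (it_nonneg hG hβ hσ hs' m j)
        have h2 : (0:ℝ) ≤ 1 + β * ∑ j, G i j * it G β σ s' m j := by positivity
        exact mul_le_mul_of_nonneg_right (mul_le_mul_of_nonneg_right hss (hσ i)) h2
    _ ≤ K G β σ s (it G β σ s m) i := K_mono_a' hG hβ hσ (hs'.trans hss) ih i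

/-- continuity of the iterates in `s`. -/
lemma it_cont (k : ℕ) (i : Fin n) : Continuous (fun s => it G β σ s k i) := by
  induction k generalizing i with
  | zero => simpa [it] using continuous_const
  | succ m ih =>
    show Continuous fun s => s * σ i * (1 + β * ∑ j, G i j * it G β σ s m j)
    apply Continuous.mul
    · exact (continuous_id.mul continuous_const)
    · apply Continuous.add continuous_const
      apply Continuous.mul continuous_const
      exact continuous_finset_sum _ fun j _ => (continuous_const.mul (ih j))

/-- If the iterates are bounded, `afix` is a nonnegative fixed point below the bound. -/
lemma afix_spec {s : ℝ} (hs : 0 ≤ s) {b : Fin n → ℝ}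
    (hbd : ∀ k i, it G β σ s k i ≤ b i) :
    (∀ i, 0 ≤ afix G β σ s i) ∧ K G β σ s (afix G β σ s) = afix G β σ s ∧
      (∀ i, afix G β σ s i ≤ b i) := by
  have hbdd : ∀ i, BddAbove (Set.range fun k => it G β σ s k i) := by
    intro i
    exact ⟨b i, by rintro x ⟨k, rfl⟩; exact hbd k i⟩
  have htt : ∀ i, Filter.Tendsto (fun k => it G β σ s k i) Filter.atTop
      (nhds (afix G β σ s i)) := fun i =>
    tendsto_atTop_ciSup (it_mono_k hG hβ hσ hs i) (hbdd i)
  have hnn : ∀ i, 0 ≤ afix G β σ s i := by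
    intro i
    have := le_ciSup (hbdd i) 0
    simp [it] at this; exact this
  refine ⟨hnn, ?_, ?_⟩
  · funext i
    have h1 : Filter.Tendsto (fun k => it G β σ s (k+1) i) Filter.atTop
        (nhds (afix G β σ s i)) := (htt i).comp (Filter.tendsto_add_atTop_nat 1)
    have h2 : Filter.Tendsto (fun k => K G β σ s (it G β σ s k) i) Filter.atTop
        (nhds (K G β σ s (afix G β σ s) i)) := by
      show Filter.Tendsto (fun k => s * σ i * (1 + β * ∑ j, G i j * it G β σ s k j))
        Filter.atTop (nhds (s * σ i * (1 + β * ∑ j, G i j * afix G β σ s j)))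
      apply Filter.Tendsto.const_mul
      apply Filter.Tendsto.const_add
      apply Filter.Tendsto.const_mul
      exact tendsto_finset_sum _ fun j _ => (htt j).const_mul _
    exact tendsto_nhds_unique h2 h1
  · intro i
    exact ciSup_le fun k => hbd k i

/-- limit of fixed points is a fixed point. -/
lemma lim_fix {sk : ℕ → ℝ} {s₀ : ℝ} (hsk : Filter.Tendsto sk Filter.atTop (nhds s₀))
    {ak : ℕ → Fin n → ℝ} (hfk : ∀ k, K G β σ (sk k) (ak k) = ak k)
    {ℓ : Fin n → ℝ} (hl : ∀ i, Filter.Tendsto (fun k => ak k i) Filter.atTop (nhds (ℓ i))) :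
    K G β σ s₀ ℓ = ℓ := by
  funext i
  have h1 : Filter.Tendsto (fun k => K G β σ (sk k) (ak k) i) Filter.atTop
      (nhds (K G β σ s₀ ℓ i)) := by
    show Filter.Tendsto (fun k => sk k * σ i * (1 + β * ∑ j, G i j * ak k j))
      Filter.atTop (nhds (s₀ * σ i * (1 + β * ∑ j, G i j * ℓ j)))
    apply Filter.Tendsto.mul
    · exact hsk.mul_const _
    · apply Filter.Tendsto.const_add
      apply Filter.Tendsto.const_mul
      exact tendsto_finset_sum _ fun j _ => (hl j).const_mul _
  have h2 : Filter.Tendsto (fun k => K G β σ (sk k) (ak k) i) Filter.atTop (nhds (ℓ i)) := by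
    simp_rw [fun k => congrFun (hfk k) i]
    exact hl i
  exact tendsto_nhds_unique h1 h2

end iter
section P
variable {P : ℝ → ℝ}
variable (hP_mono : StrictMonoOn P (Set.Ici (0:ℝ)))
    (hP_conc : ConcaveOn ℝ (Set.Ici (0:ℝ)) P)
    (hP_range : ∀ y : ℝ, 0 ≤ y → P y ∈ Set.Ico (0:ℝ) 1)
    (hP_diff : ∀ y : ℝ, 0 ≤ y → DifferentiableAt ℝ P y)

include hP_mono hP_conc hP_range hP_diff

set_option linter.unusedSectionVars false

lemma Panti (y z : ℝ) (hy : 0 ≤ y) (hyz : y ≤ z) : deriv P z ≤ deriv P y :=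
  hP_conc.antitoneOn_deriv (fun x hx => hP_diff x hx) (Set.mem_Ici.2 hy)
    (Set.mem_Ici.2 (hy.trans hyz)) hyz

lemma Ppos (y : ℝ) (hy : 0 ≤ y) : 0 < deriv P y := by
  have h1 : slope P y (y + 1) ≤ deriv P y :=
    hP_conc.slope_le_deriv (Set.mem_Ici.2 hy) (Set.mem_Ici.2 (by linarith)) (by linarith)
      (hP_diff y hy)
  have h2 : P y < P (y + 1) :=
    hP_mono (Set.mem_Ici.2 hy) (Set.mem_Ici.2 (by linarith)) (by linarith)
  rw [slope_def_field] at h1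
  have : (0:ℝ) < (P (y+1) - P y) / (y + 1 - y) := by
    apply div_pos (by linarith) (by linarith)
  linarith

lemma Pub (y : ℝ) (hy : 0 < y) : deriv P y ≤ 1 / y := by
  have h1 : deriv P y ≤ slope P 0 y :=
    hP_conc.deriv_le_slope (Set.mem_Ici.2 le_rfl) (Set.mem_Ici.2 hy.le) hy
      (hP_diff y hy.le)
  rw [slope_def_field] at h1
  have h2 : P y < 1 := (hP_range y hy.le).2
  have h3 : 0 ≤ P 0 := (hP_range 0 le_rfl).1
  calc deriv P y ≤ (P y - P 0) / (y - 0) := h1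
  _ ≤ 1 / y := by
      rw [sub_zero]
      gcongr
      · linarith

end P

section Yp
variable {G : Matrix (Fin n) (Fin n) ℝ} {β : ℝ} {σ : Fin n → ℝ}
variable (hG : ∀ i j, 0 ≤ G i j) (hβ : 0 < β) (hσ : ∀ i, 0 ≤ σ i)

include hG hβ

lemma Ys_nonneg {a : Fin n → ℝ} (ha : ∀ i, 0 ≤ a i) : 0 ≤ Ys G β a := by
  have h1 : (0:ℝ) ≤ ∑ i, a i := Finset.sum_nonneg fun i _ => ha i
  have h2 : (0:ℝ) ≤ ∑ i, ∑ j, G i j * a i * a j :=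
    Finset.sum_nonneg fun i _ => Finset.sum_nonneg fun j _ =>
      mul_nonneg (mul_nonneg (hG i j) (ha i)) (ha j)
  have : (0:ℝ) ≤ β / 2 * ∑ i, ∑ j, G i j * a i * a j := by positivity
  unfold Ys; linarith

lemma Ys_mono {a b : Fin n → ℝ} (ha : ∀ i, 0 ≤ a i) (hab : ∀ i, a i ≤ b i) :
    Ys G β a ≤ Ys G β b := by
  have hb : ∀ i, 0 ≤ b i := fun i => (ha i).trans (hab i)
  have h1 : ∑ i, a i ≤ ∑ i, b i := Finset.sum_le_sum fun i _ => hab i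
  have h2 : ∑ i, ∑ j, G i j * a i * a j ≤ ∑ i, ∑ j, G i j * b i * b j := by
    apply Finset.sum_le_sum; intro i _
    apply Finset.sum_le_sum; intro j _
    calc G i j * a i * a j ≤ G i j * b i * a j := by
          apply mul_le_mul_of_nonneg_right _ (ha j)
          exact mul_le_mul_of_nonneg_left (hab i) (hG i j)
    _ ≤ G i j * b i * b j := by
          apply mul_le_mul_of_nonneg_left (hab j)
          exact mul_nonneg (hG i j) (hb i)
  have h3 : β / 2 * ∑ i, ∑ j, G i j * a i * a j ≤ β / 2 * ∑ i, ∑ j, G i j * b i * b j := by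
    apply mul_le_mul_of_nonneg_left h2 (by positivity)
  unfold Ys; linarith

lemma Ys_ge {a : Fin n → ℝ} (ha : ∀ i, 0 ≤ a i) (i : Fin n) : a i ≤ Ys G β a := by
  have h1 : a i ≤ ∑ j, a j := Finset.single_le_sum (fun j _ => ha j) (Finset.mem_univ i)
  have h2 : (0:ℝ) ≤ ∑ i, ∑ j, G i j * a i * a j :=
    Finset.sum_nonneg fun i _ => Finset.sum_nonneg fun j _ =>
      mul_nonneg (mul_nonneg (hG i j) (ha i)) (ha j)
  have : (0:ℝ) ≤ β / 2 * ∑ i, ∑ j, G i j * a i * a j := by positivity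
  unfold Ys; linarith

omit hG hβ in
lemma Ys_tendsto {ak : ℕ → Fin n → ℝ} {a₀ : Fin n → ℝ}
    (hl : ∀ i, Filter.Tendsto (fun k => ak k i) Filter.atTop (nhds (a₀ i))) :
    Filter.Tendsto (fun k => Ys G β (ak k)) Filter.atTop (nhds (Ys G β a₀)) := by
  unfold Ys
  apply Filter.Tendsto.add
  · exact tendsto_finset_sum _ fun i _ => hl i
  · apply Filter.Tendsto.const_mul
    apply tendsto_finset_sum _ fun i _ => ?_
    apply tendsto_finset_sum _ fun j _ => ?_
    exact ((hl i).const_mul _).mul (hl j)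

/-- conversion between the matrix form of the equilibrium equation and the
fixed-point form. -/
lemma mat_iff (a : Fin n → ℝ) (s : ℝ) :
    (((1 : Matrix (Fin n) (Fin n) ℝ) - (s * β) • (Matrix.diagonal σ * G)).mulVec a = s • σ)
      ↔ K G β σ s a = a := by
  have key : ∀ i, (((1 : Matrix (Fin n) (Fin n) ℝ)
      - (s * β) • (Matrix.diagonal σ * G)).mulVec a) i - (s • σ) i
      = a i - K G β σ s a i := by
    intro i
    have h1 : ((Matrix.diagonal σ * G).mulVec a) i = σ i * ∑ j, G i j * a j := by
      simp [Matrix.mulVec, dotProduct, Matrix.diagonal_mul, Finset.mul_sum, mul_assoc]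
    rw [Matrix.sub_mulVec, Matrix.one_mulVec, Matrix.smul_mulVec]
    simp only [Pi.sub_apply, Pi.smul_apply, smul_eq_mul, h1, K]
    ring
  constructor
  · intro h; funext i
    have := key i
    rw [h] at this
    simp only [sub_self] at this
    linarith [this]
  · intro h; funext i
    have := key i
    rw [h] at this
    simp only [sub_self] at this
    have : (((1 : Matrix (Fin n) (Fin n) ℝ)
      - (s * β) • (Matrix.diagonal σ * G)).mulVec a) i = (s • σ) i := by linarith
    exact this

end Yp

section Tend
variable {G : Matrix (Fin n) (Fin n) ℝ} {β : ℝ} {σ : Fin n → ℝ}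
variable (hG : ∀ i j, 0 ≤ G i j) (hβ : 0 < β) (hσ : ∀ i, 0 ≤ σ i)
include hG hβ hσ

open Filter in
lemma fix_tendsto_up {sk : ℕ → ℝ} {s₀ : ℝ}
    (hpos : ∀ k, 0 < sk k) (hmono : Monotone sk) (hles : ∀ k, sk k ≤ s₀)
    (hsk : Tendsto sk atTop (nhds s₀))
    {ak : ℕ → Fin n → ℝ} (hnnk : ∀ k i, 0 ≤ ak k i)
    (hfixk : ∀ k, K G β σ (sk k) (ak k) = ak k)
    {a₀ : Fin n → ℝ} (hnn0 : ∀ i, 0 ≤ a₀ i) (hfix0 : K G β σ s₀ a₀ = a₀) :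
    ∀ i, Tendsto (fun k => ak k i) atTop (nhds (a₀ i)) := by
  have hb : ∀ k i, ak k i ≤ a₀ i := fun k =>
    comp hG hβ hσ (hpos k) (hles k) hnn0 (hnnk k) hfix0 (hfixk k)
  have hm : ∀ i, Monotone (fun k => ak k i) := by
    intro i k k' hkk'
    exact comp hG hβ hσ (hpos k) (hmono hkk') (hnnk k') (hnnk k) (hfixk k') (hfixk k) i
  set ℓ : Fin n → ℝ := fun i => ⨆ k, ak k i with hℓ
  have hbdd : ∀ i, BddAbove (Set.range fun k => ak k i) := fun i =>
    ⟨a₀ i, by rintro x ⟨k, rfl⟩; exact hb k i⟩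
  have htt : ∀ i, Tendsto (fun k => ak k i) atTop (nhds (ℓ i)) := fun i =>
    tendsto_atTop_ciSup (hm i) (hbdd i)
  have hfixℓ : K G β σ s₀ ℓ = ℓ := lim_fix hG hβ hσ hsk hfixk htt
  have hnnℓ : ∀ i, 0 ≤ ℓ i := fun i => le_trans (hnnk 0 i) (le_ciSup (hbdd i) 0)
  have h0 : 0 < s₀ := lt_of_lt_of_le (hpos 0) (hles 0)
  have heq : ℓ = a₀ := fix_unique hG hβ hσ h0 hnnℓ hnn0 hfixℓ hfix0
  rw [← heq]; exact htt

open Filter in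
lemma fix_tendsto_down {sk : ℕ → ℝ} {s₀ : ℝ} (h0 : 0 < s₀)
    (hanti : Antitone sk) (hges : ∀ k, s₀ ≤ sk k)
    (hsk : Tendsto sk atTop (nhds s₀))
    {ak : ℕ → Fin n → ℝ} (hnnk : ∀ k i, 0 ≤ ak k i)
    (hfixk : ∀ k, K G β σ (sk k) (ak k) = ak k)
    {a₀ : Fin n → ℝ} (hnn0 : ∀ i, 0 ≤ a₀ i) (hfix0 : K G β σ s₀ a₀ = a₀) :
    ∀ i, Tendsto (fun k => ak k i) atTop (nhds (a₀ i)) := by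
  have hm : ∀ i, Antitone (fun k => ak k i) := by
    intro i k k' hkk'
    exact comp hG hβ hσ (lt_of_lt_of_le h0 (hges k')) (hanti hkk') (hnnk k) (hnnk k')
      (hfixk k) (hfixk k') i
  set ℓ : Fin n → ℝ := fun i => ⨅ k, ak k i with hℓ
  have hbdd : ∀ i, BddBelow (Set.range fun k => ak k i) := fun i =>
    ⟨0, by rintro x ⟨k, rfl⟩; exact hnnk k i⟩
  have htt : ∀ i, Tendsto (fun k => ak k i) atTop (nhds (ℓ i)) := fun i =>
    tendsto_atTop_ciInf (hm i) (hbdd i)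
  have hfixℓ : K G β σ s₀ ℓ = ℓ := lim_fix hG hβ hσ hsk hfixk htt
  have hnnℓ : ∀ i, 0 ≤ ℓ i := fun i => le_ciInf (fun k => hnnk k i)
  have heq : ℓ = a₀ := fix_unique hG hβ hσ h0 hnnℓ hnn0 hfixℓ hfix0
  rw [← heq]; exact htt

end Tend

section Main
variable {G : Matrix (Fin n) (Fin n) ℝ} {β : ℝ} {σ : Fin n → ℝ} {P : ℝ → ℝ}

set_option maxHeartbeats 2000000 in
open Filter in
lemma exist_main (hG : ∀ i j, 0 ≤ G i j) (hβ : 0 < β) (hσ : ∀ i, 0 ≤ σ i)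
    (hP_mono : StrictMonoOn P (Set.Ici (0:ℝ)))
    (hP_conc : ConcaveOn ℝ (Set.Ici (0:ℝ)) P)
    (hP_range : ∀ y : ℝ, 0 ≤ y → P y ∈ Set.Ico (0:ℝ) 1)
    (hP_diff : ∀ y : ℝ, 0 ≤ y → DifferentiableAt ℝ P y)
    (hP_diff2 : ∀ y : ℝ, 0 ≤ y → DifferentiableAt ℝ (deriv P) y) :
    ∃ a : Fin n → ℝ, (∀ i, 0 ≤ a i) ∧ K G β σ (deriv P (Ys G β a)) a = a := by
  classical
  have hPanti : ∀ y z : ℝ, 0 ≤ y → y ≤ z → deriv P z ≤ deriv P y :=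
    fun y z => Panti hP_mono hP_conc hP_range hP_diff y z
  have hPpos : ∀ y : ℝ, 0 ≤ y → 0 < deriv P y :=
    fun y => Ppos hP_mono hP_conc hP_range hP_diff y
  have hPub : ∀ y : ℝ, 0 < y → deriv P y ≤ 1 / y :=
    fun y => Pub hP_mono hP_conc hP_range hP_diff y
  have hPcont : ∀ y : ℝ, 0 ≤ y → ContinuousAt (deriv P) y :=
    fun y hy => (hP_diff2 y hy).continuousAt
  set A : ℝ → Fin n → ℝ := afix G β σ with hA_def
  set BD : Set ℝ := {s : ℝ | 0 < s ∧ ∃ b : Fin n → ℝ, (∀ i, 0 ≤ b i) ∧ K G β σ s b = b}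
    with hBD_def
  -- the canonical fixed point at parameters in BD
  have hafix : ∀ s ∈ BD, (∀ i, 0 ≤ A s i) ∧ K G β σ s (A s) = A s := by
    rintro s ⟨hs, b, hb, hKb⟩
    have hpre : ∀ i, K G β σ s b i ≤ b i := fun i => le_of_eq (congrFun hKb i)
    have hit := it_le_prefix hG hβ hσ hs.le hb hpre
    obtain ⟨h1, h2, _⟩ := afix_spec hG hβ hσ hs.le hit
    exact ⟨h1, h2⟩
  -- BD is downward closed
  have hdown : ∀ s ∈ BD, ∀ s', 0 < s' → s' ≤ s → s' ∈ BD := by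
    rintro s ⟨hs, b, hb, hKb⟩ s' hs' hss
    have hpre : ∀ i, K G β σ s' b i ≤ b i := by
      intro i
      calc K G β σ s' b i ≤ K G β σ s b i := K_mono_s hG hβ hσ hs'.le hss hb i
      _ = b i := congrFun hKb i
    have hit := it_le_prefix hG hβ hσ hs'.le hb hpre
    obtain ⟨h1, h2, _⟩ := afix_spec hG hβ hσ hs'.le hit
    exact ⟨hs', A s', h1, h2⟩
  -- monotonicity of the canonical fixed point
  have hAmono : ∀ s s' : ℝ, s ∈ BD → s' ∈ BD → s ≤ s' → ∀ i, A s i ≤ A s' i := by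
    intro s s' hs hs' hss
    exact comp hG hβ hσ hs.1 hss (hafix s' hs').1 (hafix s hs).1 (hafix s' hs').2
      (hafix s hs).2
  -- a small explicit element of BD
  set B : ℝ := ∑ i, σ i with hB_def
  set g : ℝ := ∑ i, ∑ j, G i j with hg_def
  have hB0 : 0 ≤ B := Finset.sum_nonneg fun i _ => hσ i
  have hg0 : 0 ≤ g := Finset.sum_nonneg fun i _ => Finset.sum_nonneg fun j _ => hG i j
  have hσB : ∀ i, σ i ≤ B := fun i =>
    Finset.single_le_sum (fun j _ => hσ j) (Finset.mem_univ i)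
  have hrow : ∀ i, ∑ j, G i j ≤ g := fun i =>
    Finset.single_le_sum (f := fun i => ∑ j, G i j)
      (fun j _ => Finset.sum_nonneg fun l _ => hG j l) (Finset.mem_univ i)
  set s₁ : ℝ := 1 / ((1 + B) * (1 + β * g)) with hs₁_def
  have hs₁pos : 0 < s₁ := by
    apply div_pos one_pos
    have h1 : (0:ℝ) < 1 + B := by linarith
    have h2 : (0:ℝ) < 1 + β * g := by nlinarith
    exact mul_pos h1 h2
  have hs₁BD : s₁ ∈ BD := by
    have hpre : ∀ i, K G β σ s₁ (fun _ => (1:ℝ)) i ≤ (fun _ => (1:ℝ)) i := by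
      intro i
      show s₁ * σ i * (1 + β * ∑ j, G i j * 1) ≤ 1
      have ht : ∑ j, G i j * (1:ℝ) ≤ g := by
        simpa [mul_one] using hrow i
      have ht0 : (0:ℝ) ≤ ∑ j, G i j * (1:ℝ) :=
        Finset.sum_nonneg fun j _ => by simpa using hG i j
      have hle : σ i * (1 + β * ∑ j, G i j * 1) ≤ (1 + B) * (1 + β * g) := by
        have hbt : β * ∑ j, G i j * (1:ℝ) ≤ β * g := mul_le_mul_of_nonneg_left ht hβ.le
        have h1 : σ i * (1 + β * ∑ j, G i j * 1) ≤ B * (1 + β * g) := by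
          apply mul_le_mul (hσB i) (by linarith) (by nlinarith) hB0
        nlinarith
      have hkey : s₁ * ((1 + B) * (1 + β * g)) = 1 := by
        rw [hs₁_def]
        field_simp
      calc s₁ * σ i * (1 + β * ∑ j, G i j * 1)
          = s₁ * (σ i * (1 + β * ∑ j, G i j * 1)) := by ring
      _ ≤ s₁ * ((1 + B) * (1 + β * g)) := by
          apply mul_le_mul_of_nonneg_left hle hs₁pos.le
      _ = 1 := hkey
    have hit := it_le_prefix hG hβ hσ hs₁pos.le (fun _ => zero_le_one) hpre
    obtain ⟨h1, h2, _⟩ := afix_spec hG hβ hσ hs₁pos.le hit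
    exact ⟨hs₁pos, A s₁, h1, h2⟩
  -- Claim A : there is v ∈ BD with Φ v < v
  have claimA : ∃ v ∈ BD, deriv P (Ys G β (A v)) < v := by
    by_cases hbig : ∃ s ∈ BD, deriv P 0 < s
    · obtain ⟨s, hsBD, hs⟩ := hbig
      refine ⟨s, hsBD, ?_⟩
      have h0 : 0 ≤ Ys G β (A s) := Ys_nonneg hG hβ (hafix s hsBD).1
      exact lt_of_le_of_lt (hPanti 0 _ le_rfl h0) hs
    · push_neg at hbig
      have hbddBD : BddAbove BD := ⟨deriv P 0, fun s hs => hbig s hs⟩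
      set sb : ℝ := sSup BD with hsb_def
      have hsb_ge : s₁ ≤ sb := le_csSup hbddBD hs₁BD
      have hsb_pos : 0 < sb := lt_of_lt_of_le hs₁pos hsb_ge
      by_cases hY : ∃ s ∈ BD, 2 / sb < Ys G β (A s)
      · obtain ⟨s₂, hs₂BD, hs₂⟩ := hY
        obtain ⟨s₃, hs₃BD, hs₃⟩ : ∃ s₃ ∈ BD, sb / 2 < s₃ :=
          exists_lt_of_lt_csSup ⟨s₁, hs₁BD⟩ (by linarith)
        have hvBD : max s₂ s₃ ∈ BD := by
          rcases max_cases s₂ s₃ with ⟨h, _⟩ | ⟨h, _⟩ <;> rw [h] <;> assumption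
        refine ⟨max s₂ s₃, hvBD, ?_⟩
        have h1 : Ys G β (A s₂) ≤ Ys G β (A (max s₂ s₃)) :=
          Ys_mono hG hβ (hafix s₂ hs₂BD).1
            (hAmono s₂ _ hs₂BD hvBD (le_max_left _ _))
        have h2 : 0 < 2 / sb := by positivity
        have h3 : 0 < Ys G β (A (max s₂ s₃)) := lt_of_lt_of_le (lt_trans h2 hs₂) h1
        calc deriv P (Ys G β (A (max s₂ s₃))) ≤ 1 / Ys G β (A (max s₂ s₃)) :=
              hPub _ h3
        _ < sb / 2 := by
            rw [div_lt_iff₀ h3]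
            rw [div_lt_iff₀ hsb_pos] at hs₂
            nlinarith [lt_of_lt_of_le hs₂ (by nlinarith : Ys G β (A s₂) * sb ≤ Ys G β (A (max s₂ s₃)) * sb)]
        _ < s₃ := hs₃
        _ ≤ max s₂ s₃ := le_max_right _ _
      · push_neg at hY
        exfalso
        set L : ℝ := 2 / sb with hL_def
        have hL0 : 0 < L := by positivity
        -- iterates at sb are bounded by L
        have hitb : ∀ k i, it G β σ sb k i ≤ L := by
          intro k i
          obtain ⟨w, hw_mono, hw_tendsto, hw_mem⟩ :=
            exists_seq_tendsto_sSup (⟨s₁, hs₁BD⟩ : BD.Nonempty) hbddBD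
          have hwle : ∀ m, it G β σ (w m) k i ≤ L := by
            intro m
            have hwBD := hw_mem m
            have h1 : ∀ l j, it G β σ (w m) l j ≤ A (w m) j := by
              apply it_le_prefix hG hβ hσ (hwBD.1).le (hafix _ hwBD).1
              exact fun j => le_of_eq (congrFun (hafix _ hwBD).2 j)
            calc it G β σ (w m) k i ≤ A (w m) i := h1 k i
            _ ≤ Ys G β (A (w m)) := Ys_ge hG hβ (hafix _ hwBD).1 i
            _ ≤ L := hY _ hwBD
          have hcont : Filter.Tendsto (fun m => it G β σ (w m) k i) Filter.atTop
              (nhds (it G β σ sb k i)) :=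
            ((it_cont hG hβ hσ k i).continuousAt).tendsto.comp hw_tendsto
          exact le_of_tendsto hcont (Filter.Eventually.of_forall hwle)
        obtain ⟨hnnb, hfixb, hleb⟩ := afix_spec hG hβ hσ hsb_pos.le hitb
        have hsbBD : sb ∈ BD := ⟨hsb_pos, A sb, hnnb, hfixb⟩
        -- push past sb
        set R : ℝ := 1 + β * g * L with hR_def
        have hR1 : 1 ≤ R := by nlinarith [mul_nonneg (mul_nonneg hβ.le hg0) hL0.le]
        have hR0 : 0 < R := by linarith
        set δ : ℝ := 1 / (2 * R) with hδ_def
        have hδ0 : 0 < δ := by positivity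
        set s' : ℝ := sb * (1 + δ) with hs'_def
        have hs'pos : 0 < s' := by nlinarith
        have hpre : ∀ i, K G β σ s' (fun j => 2 * A sb j) i ≤ 2 * A sb i := by
          intro i
          show s' * σ i * (1 + β * ∑ j, G i j * (2 * A sb j)) ≤ 2 * A sb i
          have ht2 : ∑ j, G i j * (2 * A sb j) = 2 * ∑ j, G i j * A sb j := by
            rw [Finset.mul_sum]
            apply Finset.sum_congr rfl
            intro j _
            ring
          set t : ℝ := ∑ j, G i j * A sb j with ht_def
          have ht0 : 0 ≤ t := Finset.sum_nonneg fun j _ => mul_nonneg (hG i j) (hnnb j)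
          have htg : t ≤ g * L := by
            rw [ht_def]
            calc ∑ j, G i j * A sb j ≤ ∑ j, G i j * L :=
                  Finset.sum_le_sum fun j _ => mul_le_mul_of_nonneg_left (hleb j) (hG i j)
            _ = (∑ j, G i j) * L := by rw [Finset.sum_mul]
            _ ≤ g * L := mul_le_mul_of_nonneg_right (hrow i) hL0.le
          have heqi : A sb i = sb * σ i * (1 + β * t) := (congrFun hfixb i).symm
          rw [ht2, heqi, hs'_def]
          have hδt : δ * (1 + 2 * (β * t)) ≤ 1 := by
            have h1 : 1 + 2 * (β * t) ≤ 2 * R := by nlinarith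
            calc δ * (1 + 2 * (β * t)) ≤ δ * (2 * R) :=
                  mul_le_mul_of_nonneg_left h1 hδ0.le
            _ = 1 := by rw [hδ_def]; field_simp
          have hσi := hσ i
          nlinarith [mul_le_mul_of_nonneg_left hδt (mul_nonneg hsb_pos.le hσi),
            mul_nonneg (mul_nonneg hsb_pos.le hσi) (mul_nonneg hβ.le ht0)]
        have h2nn : ∀ i, (0:ℝ) ≤ 2 * A sb i := fun i => by nlinarith [hnnb i]
        have hit' := it_le_prefix hG hβ hσ hs'pos.le h2nn hpre
        obtain ⟨h1', h2', _⟩ := afix_spec hG hβ hσ hs'pos.le hit'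
        have hs'BD : s' ∈ BD := ⟨hs'pos, A s', h1', h2'⟩
        have : s' ≤ sb := le_csSup hbddBD hs'BD
        nlinarith

  obtain ⟨v, hvBD, hv⟩ := claimA
  have hAv := hafix v hvBD
  set Φ : ℝ → ℝ := fun s => deriv P (Ys G β (A s)) with hΦ_def
  have hΦnn : ∀ s, s ∈ BD → 0 ≤ Ys G β (A s) := fun s hs => Ys_nonneg hG hβ (hafix s hs).1
  have hΦanti : ∀ s s', s ∈ BD → s' ∈ BD → s ≤ s' → Φ s' ≤ Φ s := by
    intro s s' hs hs' hss
    apply hPanti _ _ (hΦnn s hs)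
    exact Ys_mono hG hβ (hafix s hs).1 (hAmono s s' hs hs' hss)
  set p0 : ℝ := Φ v with hp0_def
  have hp0pos : 0 < p0 := hPpos _ (hΦnn v hvBD)
  have hp0v : p0 < v := hv
  set u : ℝ := p0 / 2 with hu_def
  have hu_pos : 0 < u := by positivity
  have hu_lt_v : u < v := by rw [hu_def]; linarith
  have huBD : u ∈ BD := hdown v hvBD u hu_pos hu_lt_v.le
  have hIcc : ∀ s, s ∈ Set.Icc u v → s ∈ BD := fun s hs =>
    hdown v hvBD s (lt_of_lt_of_le hu_pos hs.1) hs.2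
  have hΦu : u < Φ u := by
    calc u < p0 := by rw [hu_def]; linarith
    _ ≤ Φ u := hΦanti u v huBD hvBD hu_lt_v.le
  set S : Set ℝ := {s | s ∈ Set.Icc u v ∧ s ≤ Φ s} with hS_def
  have huS : u ∈ S := ⟨⟨le_rfl, hu_lt_v.le⟩, hΦu.le⟩
  have hSbdd : BddAbove S := ⟨v, fun s hs => hs.1.2⟩
  set st : ℝ := sSup S with hst_def
  have hust : u ≤ st := le_csSup hSbdd huS
  have hstv : st ≤ v := csSup_le ⟨u, huS⟩ fun s hs => hs.1.2
  have hstBD : st ∈ BD := hIcc st ⟨hust, hstv⟩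
  have hst_pos : 0 < st := lt_of_lt_of_le hu_pos hust
  have hmem_lt : ∀ s, u ≤ s → s < st → s ∈ S := by
    intro s hus hsst
    obtain ⟨s'', hs''S, hss''⟩ := exists_lt_of_lt_csSup ⟨u, huS⟩ hsst
    refine ⟨⟨hus, hsst.le.trans hstv⟩, ?_⟩
    calc s ≤ s'' := hss''.le
    _ ≤ Φ s'' := hs''S.2
    _ ≤ Φ s := hΦanti s s'' (hIcc s ⟨hus, hsst.le.trans hstv⟩) (hIcc s'' hs''S.1) hss''.le
  have hnotmem : ∀ s, st < s → s ≤ v → Φ s < s := by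
    intro s hs hsv
    by_contra h
    push_neg at h
    have hsS : s ∈ S := ⟨⟨hust.trans hs.le, hsv⟩, h⟩
    exact absurd (le_csSup hSbdd hsS) (not_le.2 hs)
  have hge : st ≤ Φ st := by
    rcases eq_or_lt_of_le hust with heq | hlt
    · rw [← heq]; exact huS.2
    · set sk : ℕ → ℝ := fun k => st - (st - u) / ((k:ℝ) + 1) with hsk_def
      have hd0 : 0 < st - u := by linarith
      have hsk_lt : ∀ k, sk k < st := by
        intro k
        have : 0 < (st - u) / ((k:ℝ) + 1) := by positivity
        simp only [hsk_def]; linarith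
      have hsk_ge : ∀ k, u ≤ sk k := by
        intro k
        have h1 : (st - u) / ((k:ℝ) + 1) ≤ st - u :=
          div_le_self hd0.le (by linarith [Nat.cast_nonneg (α := ℝ) k])
        simp only [hsk_def]; linarith
      have hskS : ∀ k, sk k ∈ S := fun k => hmem_lt _ (hsk_ge k) (hsk_lt k)
      have hskmono : Monotone sk := by
        intro k k' hkk'
        simp only [hsk_def]
        have h1 : ((k:ℝ) + 1) ≤ ((k':ℝ) + 1) := by
          have := Nat.cast_le (α := ℝ).2 hkk'
          linarith
        have h2 : (st - u) / (((k':ℝ)) + 1) ≤ (st - u) / (((k:ℝ)) + 1) := by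
          gcongr
        linarith
      have hbase : Filter.Tendsto (fun k : ℕ => (st - u) / ((k:ℝ) + 1)) Filter.atTop
          (nhds 0) := by
        have := tendsto_one_div_add_atTop_nhds_zero_nat.const_mul (st - u)
        simpa [mul_one_div, div_eq_mul_inv] using this
      have hsk_tend : Filter.Tendsto sk Filter.atTop (nhds st) := by
        have := (tendsto_const_nhds : Filter.Tendsto (fun _ : ℕ => st) Filter.atTop (nhds st)).sub hbase
        simpa [hsk_def] using this
      have hskpos : ∀ k, 0 < sk k := fun k => lt_of_lt_of_le hu_pos (hsk_ge k)
      have hBDk : ∀ k, sk k ∈ BD := fun k => hIcc _ (hskS k).1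
      have htt := fix_tendsto_up hG hβ hσ hskpos hskmono (fun k => (hsk_lt k).le) hsk_tend
        (fun k => (hafix _ (hBDk k)).1) (fun k => (hafix _ (hBDk k)).2)
        (hafix st hstBD).1 (hafix st hstBD).2
      have hYt := Ys_tendsto (G := G) (β := β) htt
      have hΦt : Filter.Tendsto (fun k => Φ (sk k)) Filter.atTop (nhds (Φ st)) :=
        ((hPcont _ (hΦnn st hstBD)).tendsto).comp hYt
      exact le_of_tendsto_of_tendsto' hsk_tend hΦt (fun k => (hskS k).2)
  have hle : Φ st ≤ st := by
    rcases eq_or_lt_of_le hstv with heq | hlt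
    · rw [heq]; exact hv.le
    · set sk : ℕ → ℝ := fun k => st + (v - st) / ((k:ℝ) + 1) with hsk_def
      have hd0 : 0 < v - st := by linarith
      have hsk_gt : ∀ k, st < sk k := by
        intro k
        have : 0 < (v - st) / ((k:ℝ) + 1) := by positivity
        simp only [hsk_def]; linarith
      have hsk_le : ∀ k, sk k ≤ v := by
        intro k
        have h1 : (v - st) / ((k:ℝ) + 1) ≤ v - st :=
          div_le_self hd0.le (by linarith [Nat.cast_nonneg (α := ℝ) k])
        simp only [hsk_def]; linarith
      have hskanti : Antitone sk := by
        intro k k' hkk'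
        simp only [hsk_def]
        have h1 : ((k:ℝ) + 1) ≤ ((k':ℝ) + 1) := by
          have := Nat.cast_le (α := ℝ).2 hkk'
          linarith
        have h2 : (v - st) / (((k':ℝ)) + 1) ≤ (v - st) / (((k:ℝ)) + 1) := by
          gcongr
        linarith
      have hbase : Filter.Tendsto (fun k : ℕ => (v - st) / ((k:ℝ) + 1)) Filter.atTop
          (nhds 0) := by
        have := tendsto_one_div_add_atTop_nhds_zero_nat.const_mul (v - st)
        simpa [mul_one_div, div_eq_mul_inv] using this
      have hsk_tend : Filter.Tendsto sk Filter.atTop (nhds st) := by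
        have := (tendsto_const_nhds : Filter.Tendsto (fun _ : ℕ => st) Filter.atTop (nhds st)).add hbase
        simpa [hsk_def] using this
      have hBDk : ∀ k, sk k ∈ BD := fun k =>
        hIcc _ ⟨hust.trans (hsk_gt k).le, hsk_le k⟩
      have htt := fix_tendsto_down hG hβ hσ hst_pos hskanti (fun k => (hsk_gt k).le) hsk_tend
        (fun k => (hafix _ (hBDk k)).1) (fun k => (hafix _ (hBDk k)).2)
        (hafix st hstBD).1 (hafix st hstBD).2
      have hYt := Ys_tendsto (G := G) (β := β) htt
      have hΦt : Filter.Tendsto (fun k => Φ (sk k)) Filter.atTop (nhds (Φ st)) :=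
        ((hPcont _ (hΦnn st hstBD)).tendsto).comp hYt
      exact le_of_tendsto_of_tendsto' hΦt hsk_tend (fun k => (hnotmem _ (hsk_gt k) (hsk_le k)).le)
  have hΦst : Φ st = st := le_antisymm hle hge
  refine ⟨A st, (hafix st hstBD).1, ?_⟩
  have : deriv P (Ys G β (A st)) = st := hΦst
  rw [this]
  exact (hafix st hstBD).2

end Main

section Uq
variable {G : Matrix (Fin n) (Fin n) ℝ} {β : ℝ} {σ : Fin n → ℝ} {P : ℝ → ℝ}

/-- bundled equilibrium condition (fixed-point form). -/
def Cnd (G : Matrix (Fin n) (Fin n) ℝ) (β : ℝ) (σ : Fin n → ℝ) (P : ℝ → ℝ)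
    (p : (Fin n → ℝ) × ℝ) : Prop :=
  (∀ i, 0 ≤ p.1 i) ∧ 0 ≤ p.2 ∧ K G β σ (deriv P p.2) p.1 = p.1 ∧ p.2 = Ys G β p.1

lemma uq_aux (hG : ∀ i j, 0 ≤ G i j) (hβ : 0 < β) (hσ : ∀ i, 0 ≤ σ i)
    (hP_mono : StrictMonoOn P (Set.Ici (0:ℝ)))
    (hP_conc : ConcaveOn ℝ (Set.Ici (0:ℝ)) P)
    (hP_range : ∀ y : ℝ, 0 ≤ y → P y ∈ Set.Ico (0:ℝ) 1)
    (hP_diff : ∀ y : ℝ, 0 ≤ y → DifferentiableAt ℝ P y)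
    {p q : (Fin n → ℝ) × ℝ} (hp : Cnd G β σ P p) (hq : Cnd G β σ P q)
    (hpq : p.2 ≤ q.2) : p = q := by
  obtain ⟨hp1, hp2, hp3, hp4⟩ := hp
  obtain ⟨hq1, hq2, hq3, hq4⟩ := hq
  have hsq : 0 < deriv P q.2 := Ppos hP_mono hP_conc hP_range hP_diff q.2 hq2
  have hss : deriv P q.2 ≤ deriv P p.2 := Panti hP_mono hP_conc hP_range hP_diff p.2 q.2 hp2 hpq
  have hle : ∀ i, q.1 i ≤ p.1 i := comp hG hβ hσ hsq hss hp1 hq1 hp3 hq3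
  have hYle : Ys G β q.1 ≤ Ys G β p.1 := Ys_mono hG hβ hq1 hle
  have h2 : p.2 = q.2 := le_antisymm hpq (by rw [hp4, hq4]; exact hYle)
  have h1 : p.1 = q.1 := by
    apply fix_unique hG hβ hσ (lt_of_lt_of_le hsq hss) hp1 hq1 hp3
    rw [h2]
    exact hq3
  exact Prod.ext h1 h2

lemma sgn_aux (hG : ∀ i j, 0 ≤ G i j) (hβ : 0 < β) (hσ : ∀ i, 0 ≤ σ i)
    (hP_mono : StrictMonoOn P (Set.Ici (0:ℝ)))
    (hP_conc : ConcaveOn ℝ (Set.Ici (0:ℝ)) P)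
    (hP_range : ∀ y : ℝ, 0 ≤ y → P y ∈ Set.Ico (0:ℝ) 1)
    (hP_diff : ∀ y : ℝ, 0 ≤ y → DifferentiableAt ℝ P y)
    {p : (Fin n → ℝ) × ℝ} (hp : Cnd G β σ P p) :
    (∀ i, 0 < σ i → 0 < p.1 i) ∧ (∀ i, σ i = 0 → p.1 i = 0) := by
  obtain ⟨hp1, hp2, hp3, _⟩ := hp
  have hs : 0 < deriv P p.2 := Ppos hP_mono hP_conc hP_range hP_diff p.2 hp2
  constructor
  · intro i hi
    have := fix_lb hG hβ hσ hs.le hp1 hp3 i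
    nlinarith
  · intro i hi
    exact fix_zero hG hβ hσ hp3 hi

end Uq

end St0

/-- existence and uniqueness of the Nash equilibrium `(a*, Y*)` given an
equity allocation `σ`, together with the sign properties of the equilibrium actions. -/
theorem statement_0 {n : ℕ} (G : Matrix (Fin n) (Fin n) ℝ)
    (hG_symm : G.IsSymm)
    (hG_nonneg : ∀ i j, 0 ≤ G i j)
    (hG_diag : ∀ i, G i i = 0)
    (hG_ne : G ≠ 0)
    (β : ℝ) (hβ : 0 < β)
    (P : ℝ → ℝ)
    (hP_mono : StrictMonoOn P (Set.Ici (0:ℝ)))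
    (hP_conc : ConcaveOn ℝ (Set.Ici (0:ℝ)) P)
    (hP_range : ∀ y : ℝ, 0 ≤ y → P y ∈ Set.Ico (0:ℝ) 1)
    (hP_diff : ∀ y : ℝ, 0 ≤ y → DifferentiableAt ℝ P y)
    (hP_diff2 : ∀ y : ℝ, 0 ≤ y → DifferentiableAt ℝ (deriv P) y)
    (σ : Fin n → ℝ) (hσ : ∀ i, 0 ≤ σ i) :
    (∃! p : (Fin n → ℝ) × ℝ,
      (∀ i, 0 ≤ p.1 i) ∧ 0 ≤ p.2 ∧
      ((1 : Matrix (Fin n) (Fin n) ℝ)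
          - (deriv P p.2 * β) • (Matrix.diagonal σ * G)).mulVec p.1 = deriv P p.2 • σ ∧
      p.2 = ∑ i, p.1 i + β / 2 * ∑ i, ∑ j, G i j * p.1 i * p.1 j) ∧
    (∀ p : (Fin n → ℝ) × ℝ,
      ((∀ i, 0 ≤ p.1 i) ∧ 0 ≤ p.2 ∧
      ((1 : Matrix (Fin n) (Fin n) ℝ)
          - (deriv P p.2 * β) • (Matrix.diagonal σ * G)).mulVec p.1 = deriv P p.2 • σ ∧
      p.2 = ∑ i, p.1 i + β / 2 * ∑ i, ∑ j, G i j * p.1 i * p.1 j) →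
      (∀ i, 0 < σ i → 0 < p.1 i) ∧ (∀ i, σ i = 0 → p.1 i = 0)) := by
  classical
  have hiff : ∀ p : (Fin n → ℝ) × ℝ,
      ((∀ i, 0 ≤ p.1 i) ∧ 0 ≤ p.2 ∧
      ((1 : Matrix (Fin n) (Fin n) ℝ)
          - (deriv P p.2 * β) • (Matrix.diagonal σ * G)).mulVec p.1 = deriv P p.2 • σ ∧
      p.2 = ∑ i, p.1 i + β / 2 * ∑ i, ∑ j, G i j * p.1 i * p.1 j)
        ↔ St0.Cnd G β σ P p := by
    intro p
    have hY : St0.Ys G β p.1 = ∑ i, p.1 i + β / 2 * ∑ i, ∑ j, G i j * p.1 i * p.1 j := rfl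
    constructor
    · rintro ⟨h1, h2, h3, h4⟩
      exact ⟨h1, h2, (St0.mat_iff hG_nonneg hβ p.1 (deriv P p.2)).mp h3, by rw [hY]; exact h4⟩
    · rintro ⟨h1, h2, h3, h4⟩
      exact ⟨h1, h2, (St0.mat_iff hG_nonneg hβ p.1 (deriv P p.2)).mpr h3, by rw [← hY]; exact h4⟩
  obtain ⟨a, hann, hfa⟩ := St0.exist_main hG_nonneg hβ hσ hP_mono hP_conc hP_range hP_diff hP_diff2
  have hpC : St0.Cnd G β σ P (a, St0.Ys G β a) :=
    ⟨hann, St0.Ys_nonneg hG_nonneg hβ hann, hfa, rfl⟩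
  constructor
  · refine ⟨(a, St0.Ys G β a), (hiff _).mpr hpC, ?_⟩
    intro q hq
    have hqC := (hiff q).mp hq
    rcases le_total q.2 (St0.Ys G β a) with h | h
    · exact St0.uq_aux hG_nonneg hβ hσ hP_mono hP_conc hP_range hP_diff hqC hpC h
    · exact (St0.uq_aux hG_nonneg hβ hσ hP_mono hP_conc hP_range hP_diff hpC hqC h).symm
  · intro p hp
    exact St0.sgn_aux hG_nonneg hβ hσ hP_mono hP_conc hP_range hP_diff ((hiff p).mp hp)
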